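/- Let H ∈ (0,1/2] and let m ≥ 2 be an integer. Then for all integers i, j with 1 ≤ i < j, one has | (j − i)^{2H} − ( m·(⌈j/m⌉ − ⌈i/m⌉) )^{2H} | ≤ (m − 1)^{2H}. Consequently, if B^H satisfies E(B_s^H − B_t^H)² = |s−t|^{2H}, then for any integer n ≥ 1 and all 1 ≤ i < j ≤ nm, | E(B_{i/(nm)}^H − B_{j/(nm)}^H)² − E(B_{⌈i/m⌉/n}^H − B_{⌈j/m⌉/n}^H)² | ≤ n^{−2H} (1 − 1/m)^{2H}. -/

import Mathlib

open MeasureTheory Real Set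

private lemma aux_subadd {x y p : ℝ} (hx : 0 ≤ x) (hy : 0 ≤ y) (hp : 0 ≤ p) (hp1 : p ≤ 1) :
    (x + y) ^ p ≤ x ^ p + y ^ p := by
  have := NNReal.rpow_add_le_add_rpow (⟨x, hx⟩ : NNReal) (⟨y, hy⟩ : NNReal) hp hp1
  have h' := NNReal.coe_le_coe.2 this
  push_cast at h'
  exact h'

private lemma aux_abs {x y p : ℝ} (hx : 0 ≤ x) (hy : 0 ≤ y) (hp : 0 ≤ p) (hp1 : p ≤ 1) :
    |x ^ p - y ^ p| ≤ |x - y| ^ p := by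
  wlog h : y ≤ x generalizing x y
  · rw [abs_sub_comm, abs_sub_comm x y]; exact this hy hx (le_of_not_ge h)
  have h1 : y ^ p ≤ x ^ p := Real.rpow_le_rpow hy h hp
  rw [abs_of_nonneg (sub_nonneg.2 h1), abs_of_nonneg (sub_nonneg.2 h)]
  have : x ^ p ≤ (x - y) ^ p + y ^ p := by
    have := aux_subadd (sub_nonneg.2 h) hy hp hp1
    simpa using this
  linarith

/-- The increment-variance comparison: for `H ∈ (0,1/2]` and an integer `m ≥ 2`,
`| (j-i)^{2H} - (m(⌈j/m⌉-⌈i/m⌉))^{2H} | ≤ (m-1)^{2H}` for all `1 ≤ i < j`;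
consequently, for a process with `E(B_s - B_t)² = |s-t|^{2H}`, the grid
variance distortion is at most `n^{-2H} (1 - 1/m)^{2H}`. -/
theorem increment_variance_comparison {Ω : Type*} [MeasureSpace Ω]
    (H : ℝ) (hH : H ∈ Set.Ioc (0 : ℝ) (1 / 2)) (m : ℕ) (hm : 2 ≤ m) :
    (∀ i j : ℕ, 1 ≤ i → i < j →
      |((j : ℝ) - (i : ℝ)) ^ (2 * H) -
          ((m : ℝ) * ((⌈(j : ℝ) / (m : ℝ)⌉ : ℝ) - (⌈(i : ℝ) / (m : ℝ)⌉ : ℝ))) ^ (2 * H)| ≤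
        ((m : ℝ) - 1) ^ (2 * H)) ∧
    ∀ B : ℝ → Ω → ℝ,
      (∀ s t : ℝ, 0 ≤ s → 0 ≤ t →
        ∫ ω, (B s ω - B t ω) ^ 2 = |s - t| ^ (2 * H)) →
      ∀ n : ℕ, 1 ≤ n → ∀ i j : ℕ, 1 ≤ i → i < j → j ≤ n * m →
        |(∫ ω, (B ((i : ℝ) / ((n : ℝ) * (m : ℝ))) ω -
              B ((j : ℝ) / ((n : ℝ) * (m : ℝ))) ω) ^ 2) -
            ∫ ω, (B ((⌈(i : ℝ) / (m : ℝ)⌉ : ℝ) / (n : ℝ)) ω -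
              B ((⌈(j : ℝ) / (m : ℝ)⌉ : ℝ) / (n : ℝ)) ω) ^ 2| ≤
          (n : ℝ) ^ (-(2 * H)) * (1 - 1 / (m : ℝ)) ^ (2 * H) := by
  obtain ⟨hH0, hH1⟩ := hH
  set p := 2 * H with hp_def
  have hp0 : 0 < p := by positivity
  have hp1 : p ≤ 1 := by simp only [hp_def]; linarith
  have hm0 : (0 : ℝ) < m := by positivity
  -- bound on m*⌈k/m⌉ - k
  have hkey : ∀ k : ℕ, (k : ℝ) ≤ (m : ℝ) * (⌈(k : ℝ) / (m : ℝ)⌉ : ℝ) ∧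
      (m : ℝ) * (⌈(k : ℝ) / (m : ℝ)⌉ : ℝ) ≤ (k : ℝ) + ((m : ℝ) - 1) := by
    intro k
    have h1 : (k : ℝ) / m ≤ (⌈(k : ℝ) / m⌉ : ℝ) := Int.le_ceil _
    have h2 : ((⌈(k : ℝ) / m⌉ : ℤ) : ℝ) < (k : ℝ) / m + 1 := Int.ceil_lt_add_one _
    constructor
    · calc (k : ℝ) = (k : ℝ) / m * m := by field_simp
        _ ≤ (⌈(k : ℝ) / m⌉ : ℝ) * m := by
            exact mul_le_mul_of_nonneg_right h1 hm0.le
        _ = (m : ℝ) * (⌈(k : ℝ) / m⌉ : ℝ) := mul_comm _ _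
    · have h3 : (m : ℝ) * (⌈(k : ℝ) / m⌉ : ℝ) < (k : ℝ) + m := by
        have := mul_lt_mul_of_pos_left h2 hm0
        calc (m : ℝ) * (⌈(k : ℝ) / m⌉ : ℝ) < (m : ℝ) * ((k : ℝ) / m + 1) := this
          _ = (k : ℝ) + m := by field_simp
      have h4 : ((m : ℤ) * ⌈(k : ℝ) / m⌉ : ℤ) < (k : ℤ) + m := by
        have h4' : (((m : ℤ) * ⌈(k : ℝ) / m⌉ : ℤ) : ℝ) < (((k : ℤ) + m : ℤ) : ℝ) := by
          push_cast; linarith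
        exact_mod_cast h4'
      have h5 : ((m : ℤ) * ⌈(k : ℝ) / m⌉ : ℤ) ≤ (k : ℤ) + m - 1 := by omega
      have h6 : (((m : ℤ) * ⌈(k : ℝ) / m⌉ : ℤ) : ℝ) ≤ (((k : ℤ) + m - 1 : ℤ) : ℝ) := by
        exact_mod_cast h5
      push_cast at h6
      linarith
  have hceil_mono : ∀ i j : ℕ, i ≤ j →
      (⌈(i : ℝ) / m⌉ : ℤ) ≤ ⌈(j : ℝ) / m⌉ := by
    intro i j hij
    have hij' : (i : ℝ) ≤ j := by exact_mod_cast hij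
    exact Int.ceil_le_ceil (by gcongr)
  have part1 : ∀ i j : ℕ, 1 ≤ i → i < j →
      |((j : ℝ) - (i : ℝ)) ^ p -
          ((m : ℝ) * ((⌈(j : ℝ) / (m : ℝ)⌉ : ℝ) - (⌈(i : ℝ) / (m : ℝ)⌉ : ℝ))) ^ p| ≤
        ((m : ℝ) - 1) ^ p := by
    intro i j hi hij
    set a : ℝ := (j : ℝ) - i with ha_def
    set d : ℝ := (m : ℝ) * ((⌈(j : ℝ) / m⌉ : ℝ) - (⌈(i : ℝ) / m⌉ : ℝ)) with hd_def
    have hijR : (i : ℝ) ≤ j := by exact_mod_cast hij.le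
    have ha : 0 ≤ a := by simp [ha_def]; linarith
    have hd : 0 ≤ d := by
      have := hceil_mono i j hij.le
      have : ((⌈(i : ℝ) / m⌉ : ℤ) : ℝ) ≤ ((⌈(j : ℝ) / m⌉ : ℤ) : ℝ) := by exact_mod_cast this
      simp only [hd_def]
      have : (0:ℝ) ≤ (⌈(j : ℝ) / m⌉ : ℝ) - (⌈(i : ℝ) / m⌉ : ℝ) := by linarith
      positivity
    have hbd : |a - d| ≤ (m : ℝ) - 1 := by
      obtain ⟨hj1, hj2⟩ := hkey j
      obtain ⟨hi1, hi2⟩ := hkey i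
      have hdeq : d = (m : ℝ) * (⌈(j : ℝ) / m⌉ : ℝ) - (m : ℝ) * (⌈(i : ℝ) / m⌉ : ℝ) := by
        simp [hd_def]; ring
      rw [abs_le]
      constructor <;> simp [ha_def, hdeq] <;> linarith
    calc |a ^ p - d ^ p| ≤ |a - d| ^ p := aux_abs ha hd hp0.le hp1
      _ ≤ ((m : ℝ) - 1) ^ p := by
          apply Real.rpow_le_rpow (abs_nonneg _) hbd hp0.le
  refine ⟨part1, ?_⟩
  intro B hB n hn i j hi hij hjnm
  have hn0 : (0 : ℝ) < n := by exact_mod_cast hn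
  have hnm0 : (0 : ℝ) < (n : ℝ) * m := by positivity
  have hci : (0 : ℤ) ≤ ⌈(i : ℝ) / m⌉ := Int.ceil_nonneg (by positivity)
  have hcj : (0 : ℤ) ≤ ⌈(j : ℝ) / m⌉ := Int.ceil_nonneg (by positivity)
  have hciR : (0 : ℝ) ≤ (⌈(i : ℝ) / m⌉ : ℝ) := by exact_mod_cast hci
  have hcjR : (0 : ℝ) ≤ (⌈(j : ℝ) / m⌉ : ℝ) := by exact_mod_cast hcj
  rw [hB _ _ (by positivity) (by positivity), hB _ _ (by positivity) (by positivity)]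
  set a : ℝ := (j : ℝ) - i with ha_def
  set cd : ℝ := (⌈(j : ℝ) / m⌉ : ℝ) - (⌈(i : ℝ) / m⌉ : ℝ) with hcd_def
  have hijR : (i : ℝ) < j := by exact_mod_cast hij
  have ha : 0 ≤ a := by simp [ha_def]; linarith
  have hcd0 : 0 ≤ cd := by
    have := hceil_mono i j hij.le
    have : ((⌈(i : ℝ) / m⌉ : ℤ) : ℝ) ≤ ((⌈(j : ℝ) / m⌉ : ℤ) : ℝ) := by exact_mod_cast this
    simp only [hcd_def]; linarith
  have e1 : |(i : ℝ) / ((n : ℝ) * m) - (j : ℝ) / ((n : ℝ) * m)| = a / ((n : ℝ) * m) := by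
    rw [div_sub_div_same, abs_div, abs_of_pos hnm0, abs_sub_comm]
    rw [abs_of_nonneg ha]
  have e2 : |(⌈(i : ℝ) / m⌉ : ℝ) / n - (⌈(j : ℝ) / m⌉ : ℝ) / n| = ((m : ℝ) * cd) / ((n : ℝ) * m) := by
    rw [div_sub_div_same, abs_div, abs_of_pos hn0, abs_sub_comm, abs_of_nonneg hcd0]
    rw [mul_comm (n : ℝ) (m : ℝ), mul_div_mul_left cd (n : ℝ) hm0.ne']
  rw [e1, e2]
  rw [Real.div_rpow ha hnm0.le, Real.div_rpow (by positivity) hnm0.le, div_sub_div_same, abs_div,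
    abs_of_pos (Real.rpow_pos_of_pos hnm0 p)]
  have hbound := part1 i j hi hij
  have hmain : |a ^ p - ((m : ℝ) * cd) ^ p| ≤ ((m : ℝ) - 1) ^ p := hbound
  have hm2 : (2 : ℝ) ≤ (m : ℝ) := by exact_mod_cast hm
  have hrhs : ((m : ℝ) - 1) ^ p / ((n : ℝ) * m) ^ p = (n : ℝ) ^ (-p) * (1 - 1 / (m : ℝ)) ^ p := by
    rw [Real.mul_rpow hn0.le hm0.le, Real.rpow_neg hn0.le]
    have hmm : (1 - 1 / (m : ℝ)) ^ p = ((m : ℝ) - 1) ^ p / (m : ℝ) ^ p := by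
      rw [← Real.div_rpow (by linarith : (0:ℝ) ≤ (m:ℝ) - 1) hm0.le]
      congr 1
      field_simp
    rw [hmm]
    have hmp : (0:ℝ) < (m : ℝ) ^ p := Real.rpow_pos_of_pos hm0 p
    have hnp : (0:ℝ) < (n : ℝ) ^ p := Real.rpow_pos_of_pos hn0 p
    field_simp
  rw [← hrhs]
  gcongr
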